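/- Let X be a real normed space, M a nonempty subset of X, and S, T : M → M self-mappings. Suppose (i) (S,T) is a generalized JH-operator pair with order n₀ for some n₀ ∈ ℕ, and (ii) for each x, y ∈ M, ψ(∫₀^{‖Tx−Ty‖} φ(t)dt) ≤ F(ψ(∫₀^{γ(m₂(x,y))} φ(t)dt), φᵤ(∫₀^{γ(m₂(x,y))} φ(t)dt)), where ψ is an altering distance function, φᵤ is an ultra altering distance function, F is a C-class function, and the triple (ψ, φᵤ, F) is monotone. Then Fix(S) ∩ Fix(T) ≠ ∅. -/

import Mathlib

open MeasureTheory Filter Topology Set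

noncomputable section

/-- The integral `∫₀^a φ(t) dt`. -/
def intPhi (phi : ℝ → ℝ) (a : ℝ) : ℝ := ∫ t in (0:ℝ)..a, phi t

/-- `φ : [0,∞) → [0,∞)` is Lebesgue integrable, summable, nonnegative, with
`∫₀^ε φ(t)dt > 0` for all `ε > 0`. -/
def PhiAdmissible (phi : ℝ → ℝ) : Prop :=
  (∀ t ≥ (0:ℝ), 0 ≤ phi t) ∧ (∀ b : ℝ, IntervalIntegrable phi volume 0 b) ∧
  ∀ ε > (0:ℝ), 0 < intPhi phi ε

/-- Altering distance function: nondecreasing, continuous, `ψ t = 0 ↔ t = 0` on `[0,∞)`. -/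
def AlteringDistance (ψ : ℝ → ℝ) : Prop :=
  MonotoneOn ψ (Ici 0) ∧ ContinuousOn ψ (Ici 0) ∧ ∀ t ≥ (0:ℝ), (ψ t = 0 ↔ t = 0)

/-- Ultra altering distance function: continuous, nondecreasing, positive on `(0,∞)`,
nonnegative at `0`. -/
def UltraAltering (φu : ℝ → ℝ) : Prop :=
  ContinuousOn φu (Ici 0) ∧ MonotoneOn φu (Ici 0) ∧ (∀ t > (0:ℝ), 0 < φu t) ∧ 0 ≤ φu 0

/-- C-class function: continuous on `[0,∞)²`, `F s t ≤ s`, and `F s t = s → s = 0 ∨ t = 0`. -/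
def CClassFun (F : ℝ → ℝ → ℝ) : Prop :=
  ContinuousOn (Function.uncurry F) (Ici 0 ×ˢ Ici 0) ∧
  (∀ s ≥ (0:ℝ), ∀ t ≥ (0:ℝ), F s t ≤ s) ∧
  (∀ s ≥ (0:ℝ), ∀ t ≥ (0:ℝ), F s t = s → s = 0 ∨ t = 0)

/-- The triple `(ψ, φᵤ, F)` is monotone. -/
def MonotoneTriple (ψ φu : ℝ → ℝ) (F : ℝ → ℝ → ℝ) : Prop :=
  ∀ x y : ℝ, 0 ≤ x → x ≤ y → F (ψ x) (φu x) ≤ F (ψ y) (φu y)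

/-- The triple `(ψ, φᵤ, F)` is strictly monotone. -/
def StrictMonotoneTriple (ψ φu : ℝ → ℝ) (F : ℝ → ℝ → ℝ) : Prop :=
  ∀ x y : ℝ, 0 ≤ x → x < y → F (ψ x) (φu x) < F (ψ y) (φu y)

/-- `γ : (0,∞) → (0,∞)` is nondecreasing with `γ t < t` for all `t > 0`. -/
def GammaAdmissible (γ : ℝ → ℝ) : Prop :=
  (∀ t > (0:ℝ), 0 < γ t) ∧ MonotoneOn γ (Ioi 0) ∧ ∀ t > (0:ℝ), γ t < t

variable {X : Type*} [NormedAddCommGroup X] [NormedSpace ℝ X]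

/-- Fixed points of `T` lying in `M`. -/
def FixOn (T : X → X) (M : Set X) : Set X := {x ∈ M | T x = x}

/-- Points of coincidence `PC(S,T)` of the pair `(S,T)` over the set `M`. -/
def PCset (S T : X → X) (M : Set X) : Set X := {w | ∃ x ∈ M, S x = w ∧ T x = w}

/-- `(S,T)` is a generalized JH-operator pair with order `n` on `M`:
there is `x ∈ M` and `w = Sx = Tx ∈ PC(S,T)` with `‖w - x‖ ≤ (δ(PC(S,T)))ⁿ`. -/
def GenJHOp (S T : X → X) (M : Set X) (n : ℕ) : Prop :=
  ∃ x ∈ M, S x = T x ∧ ‖S x - x‖ ≤ Metric.diam (PCset S T M) ^ n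

/-- `(S,T)` is a generalized JH-suboperator pair with order `n` on `M` (w.r.t. `q`):
for each `k ∈ [0,1]`, `(S, T_k)` with `T_k x = (1-k)q + kTx` is a generalized JH-operator
pair with order `n`. -/
def GenJHSubOp (S T : X → X) (M : Set X) (q : X) (n : ℕ) : Prop :=
  ∀ k ∈ Icc (0:ℝ) 1, GenJHOp S (fun x => (1 - k) • q + k • T x) M n

/-- `M` is `q`-starshaped. -/
def Starshaped (M : Set X) (q : X) : Prop :=
  q ∈ M ∧ ∀ x ∈ M, segment ℝ q x ⊆ M

def m1 (S T : X → X) (x y : X) : ℝ :=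
  max (max ‖S x - S y‖ ‖S x - T x‖)
    (max ‖S y - T y‖ ((‖T x - T y‖ + ‖S y - T x‖) / 2))

def n1 (S T : X → X) (x y : X) : ℝ :=
  max ‖S x - S y‖ (max ‖T x - S x‖ ‖S y - T y‖)

def m2 (S T : X → X) (x y : X) : ℝ :=
  max (max ‖S x - S y‖ ‖S x - T x‖)
    (max ‖S y - T y‖ ((‖S x - T y‖ + ‖S y - T x‖) / 2))

def m3 (S T : X → X) (q x y : X) : ℝ :=
  max (max ‖S x - S y‖ (Metric.infDist (S x) (segment ℝ q (T x))))
    (max (Metric.infDist (S y) (segment ℝ q (T y)))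
      ((Metric.infDist (S x) (segment ℝ q (T y)) +
        Metric.infDist (S y) (segment ℝ q (T x))) / 2))

/-- `Y^{a} = {f_a(k) : k ∈ [0,1]}` for a family `f`. -/
def Yfam (f : X → ℝ → X) (a : X) : Set X := f a '' Icc (0:ℝ) 1

def m4 (f : X → ℝ → X) (S T : X → X) (x y : X) : ℝ :=
  max (max ‖S x - S y‖ (Metric.infDist (S x) (Yfam f (T x))))
    (max (Metric.infDist (S y) (Yfam f (T y)))
      ((Metric.infDist (S x) (Yfam f (T y)) +
        Metric.infDist (S y) (Yfam f (T x))) / 2))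

/-- `ℑ = {f_α}_{α ∈ M}` is a family of functions `[0,1] → M` with `f_α(1) = α`. -/
def FamilyOn (f : X → ℝ → X) (M : Set X) : Prop :=
  (∀ a ∈ M, ∀ t ∈ Icc (0:ℝ) 1, f a t ∈ M) ∧ ∀ a ∈ M, f a 1 = a

/-- The family is contractive with contractiveness function `Φ : (0,1) → (0,1)`. -/
def ContractiveFamily (f : X → ℝ → X) (M : Set X) (Phi : ℝ → ℝ) : Prop :=
  (∀ t ∈ Ioo (0:ℝ) 1, Phi t ∈ Ioo (0:ℝ) 1) ∧
  ∀ a ∈ M, ∀ b ∈ M, ∀ t ∈ Ioo (0:ℝ) 1, ‖f a t - f b t‖ ≤ Phi t * ‖a - b‖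

/-- The family is jointly continuous: `tₙ → t₀` and `αₙ → α₀` imply
`f_{αₙ}(tₙ) → f_{α₀}(t₀)`. -/
def JointlyContinuousFamily (f : X → ℝ → X) (M : Set X) : Prop :=
  ∀ (tn : ℕ → ℝ) (t0 : ℝ), (∀ n, tn n ∈ Icc (0:ℝ) 1) → t0 ∈ Icc (0:ℝ) 1 →
    Tendsto tn atTop (𝓝 t0) →
    ∀ (an : ℕ → X) (a0 : X), (∀ n, an n ∈ M) → a0 ∈ M →
      Tendsto an atTop (𝓝 a0) →
      Tendsto (fun n => f (an n) (tn n)) atTop (𝓝 (f a0 t0))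

/-- `(S,T)` is a generalized JHℑ-suboperator pair with order `n` on `M`:
for each `k ∈ [0,1]`, `(S, T_k)` with `T_k x = f_{Tx}(k)` is a generalized
JH-operator pair with order `n`. -/
def GenJHImSubOp (f : X → ℝ → X) (S T : X → X) (M : Set X) (n : ℕ) : Prop :=
  ∀ k ∈ Icc (0:ℝ) 1, GenJHOp S (fun x => f (T x) k) M n

/-- Weak convergence of a sequence. -/
def WeakTendsTo (x : ℕ → X) (a : X) : Prop :=
  ∀ f : StrongDual ℝ X, Tendsto (fun n => f (x n)) atTop (𝓝 (f a))

/-- Weak (sequential) closure. -/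
def WSeqCl (A : Set X) : Set X := {a | ∃ x : ℕ → X, (∀ n, x n ∈ A) ∧ WeakTendsTo x a}

/-- Weak (sequential) compactness. -/
def WSeqCompact (A : Set X) : Prop :=
  ∀ x : ℕ → X, (∀ n, x n ∈ A) →
    ∃ a ∈ A, ∃ g : ℕ → ℕ, StrictMono g ∧ WeakTendsTo (x ∘ g) a

/-- `T` is completely continuous on `M`: weak convergence implies strong
convergence of images. -/
def CompletelyContinuousOn (T : X → X) (M : Set X) : Prop :=
  ∀ (x : ℕ → X) (a : X), (∀ n, x n ∈ M) → a ∈ M → WeakTendsTo x a →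
    Tendsto (fun n => T (x n)) atTop (𝓝 (T a))

/-- `S` is weakly continuous on `M`. -/
def WeaklyContinuousOn (S : X → X) (M : Set X) : Prop :=
  ∀ (x : ℕ → X) (a : X), (∀ n, x n ∈ M) → a ∈ M → WeakTendsTo x a →
    WeakTendsTo (fun n => S (x n)) (S a)

/-- `G` is demiclosed at `0` on `M`. -/
def DemiclosedAtZero (G : X → X) (M : Set X) : Prop :=
  ∀ (x : ℕ → X) (a : X), (∀ n, x n ∈ M) → a ∈ M → WeakTendsTo x a →
    Tendsto (fun n => G (x n)) atTop (𝓝 (0 : X)) → G a = 0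

/-- `T` is hemicompact on `M`. -/
def Hemicompact (T : X → X) (M : Set X) : Prop :=
  ∀ x : ℕ → X, (∀ n, x n ∈ M) →
    Tendsto (fun n => ‖x n - T (x n)‖) atTop (𝓝 (0 : ℝ)) →
    ∃ (a : X) (g : ℕ → ℕ), StrictMono g ∧ Tendsto (x ∘ g) atTop (𝓝 a)

/-- Opial's condition. -/
def OpialCondition (Y : Type*) [NormedAddCommGroup Y] [NormedSpace ℝ Y] : Prop :=
  ∀ (x : ℕ → Y) (a : Y), WeakTendsTo x a → ∀ y : Y, y ≠ a →
    liminf (fun n => ‖x n - a‖) atTop < liminf (fun n => ‖x n - y‖) atTop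

/-- `P_M(u)`, the set of best approximations to `u` out of `M`. -/
def PMset (M : Set X) (u : X) : Set X := {x ∈ M | ‖x - u‖ = Metric.infDist u M}

/-- `C_M^S(u) = {x ∈ M : Sx ∈ P_M(u)}`. -/
def CMSset (M : Set X) (S : X → X) (u : X) : Set X := {x ∈ M | S x ∈ PMset M u}


theorem stmt_1 {X : Type*} [NormedAddCommGroup X] [NormedSpace ℝ X]
    (M : Set X) (hMne : M.Nonempty) (S T : X → X)
    (hS : MapsTo S M M) (hT : MapsTo T M M)
    (phi ψ φu : ℝ → ℝ) (F : ℝ → ℝ → ℝ)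
    (hphi : PhiAdmissible phi) (hψ : AlteringDistance ψ) (hφu : UltraAltering φu)
    (hF : CClassFun F) (hmono : MonotoneTriple ψ φu F)
    (γ : ℝ → ℝ) (hγ : GammaAdmissible γ)
    (n₀ : ℕ) (hn₀ : 1 ≤ n₀) (hJH : GenJHOp S T M n₀)
    (hcontr : ∀ x ∈ M, ∀ y ∈ M,
      ψ (intPhi phi ‖T x - T y‖) ≤
        F (ψ (intPhi phi (γ (m2 S T x y)))) (φu (intPhi phi (γ (m2 S T x y))))) :
    ∃ x ∈ M, S x = x ∧ T x = x := by
  obtain ⟨hphi_nn, hphi_int, hphi_pos⟩ := hphi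
  obtain ⟨hψmono, hψcont, hψzero⟩ := hψ
  obtain ⟨hφucont, hφumono, hφupos, hφu0⟩ := hφu
  obtain ⟨hFcont, hFle, hFeq⟩ := hF
  obtain ⟨hγpos, hγmono, hγlt⟩ := hγ
  -- the integral function is monotone and nonnegative on [0,∞)
  have hImono : ∀ a b : ℝ, 0 ≤ a → a ≤ b → intPhi phi a ≤ intPhi phi b := by
    intro a b ha hab
    have hint : IntervalIntegrable phi volume a b :=
      (hphi_int a).symm.trans (hphi_int b)
    have hsplit : intPhi phi b = intPhi phi a + ∫ t in a..b, phi t := by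
      rw [intPhi, intPhi,
        intervalIntegral.integral_add_adjacent_intervals (hphi_int a) hint]
    have h0 : 0 ≤ ∫ t in a..b, phi t :=
      intervalIntegral.integral_nonneg hab (fun u hu => hphi_nn u (le_trans ha hu.1))
    linarith
  have hInn : ∀ a : ℝ, 0 ≤ a → 0 ≤ intPhi phi a := by
    intro a ha
    have h0 : intPhi phi 0 = 0 := intervalIntegral.integral_same
    have := hImono 0 a le_rfl ha
    linarith
  have hψ0 : ψ 0 = 0 := (hψzero 0 le_rfl).mpr rfl
  have hψnn : ∀ a : ℝ, 0 ≤ a → 0 ≤ ψ a := by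
    intro a ha
    have := hψmono (mem_Ici.mpr le_rfl) (mem_Ici.mpr ha) ha
    linarith
  -- PC(S,T) is a subsingleton
  have hsub : (PCset S T M).Subsingleton := by
    intro w1 hw1 w2 hw2
    obtain ⟨x1, hx1M, hSx1, hTx1⟩ := hw1
    obtain ⟨x2, hx2M, hSx2, hTx2⟩ := hw2
    by_contra hne
    set d := ‖w1 - w2‖ with hd_def
    have hd : 0 < d := by
      rw [hd_def, norm_pos_iff, sub_ne_zero]
      exact hne
    have hTT : ‖T x1 - T x2‖ = d := by rw [hTx1, hTx2]
    have hm2 : m2 S T x1 x2 = d := by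
      unfold m2
      rw [hSx1, hSx2, hTx1, hTx2, sub_self, sub_self, norm_zero,
        norm_sub_rev w2 w1]
      have h2 : (‖w1 - w2‖ + ‖w1 - w2‖) / 2 = ‖w1 - w2‖ := by ring
      rw [h2, max_eq_left (norm_nonneg _), max_eq_right (norm_nonneg _), max_self]
    set g := γ d with hg_def
    have hgpos : 0 < g := hγpos d hd
    have hgd : g < d := hγlt d hd
    have hIg : 0 < intPhi phi g := hphi_pos g hgpos
    have hIle : intPhi phi g ≤ intPhi phi d := hImono g d hgpos.le hgd.le
    have hψle : ψ (intPhi phi g) ≤ ψ (intPhi phi d) :=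
      hψmono (mem_Ici.mpr (hInn g hgpos.le)) (mem_Ici.mpr (hInn d (hgpos.le.trans hgd.le))) hIle
    have hc := hcontr x1 hx1M x2 hx2M
    rw [hTT, hm2] at hc
    have hφupos' : 0 < φu (intPhi phi g) := hφupos _ hIg
    have hFle' : F (ψ (intPhi phi g)) (φu (intPhi phi g)) ≤ ψ (intPhi phi g) :=
      hFle _ (hψnn _ (hInn g hgpos.le)) _ hφupos'.le
    have heq : F (ψ (intPhi phi g)) (φu (intPhi phi g)) = ψ (intPhi phi g) :=
      le_antisymm hFle' (le_trans hψle hc)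
    rcases hFeq _ (hψnn _ (hInn g hgpos.le)) _ hφupos'.le heq with h | h
    · exact absurd ((hψzero _ (hInn g hgpos.le)).mp h) (ne_of_gt hIg)
    · exact absurd h (ne_of_gt hφupos')
  have hdiam : Metric.diam (PCset S T M) = 0 := Metric.diam_subsingleton hsub
  obtain ⟨x0, hx0M, hST, hbd⟩ := hJH
  rw [hdiam, zero_pow (by omega : n₀ ≠ 0)] at hbd
  have hS0 : S x0 = x0 := by
    have h := le_antisymm hbd (norm_nonneg _)
    rwa [norm_eq_zero, sub_eq_zero] at h
  exact ⟨x0, hx0M, hS0, by rw [← hST, hS0]⟩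

end
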